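/- Let (I, ≤) be a directed set, (h_i), (k_i) directed systems of division rings with transition maps ψ_{ij}, φ_{ij}, compatible embeddings f_i : k_i → h_i, and a profinite group G with isomorphisms ω_i : G → Gal(h_i/k_i) satisfying ψ_{ij}(ω_i(σ)(x)) = ω_j(σ)(ψ_{ij}(x)) for all i ≤ j, σ ∈ G, x ∈ h_i. Suppose each h_i/k_i is an algebraic outer Galois extension. Then setting h = colim h_i and k = colim k_i, the extension h/k is an algebraic outer Galois extension with Gal(h/k) ≅ G, compatibly with the ω_i. -/

import Mathlib

open Finset MulOpposite

/-- `x` is algebraic over the subset `k` of the division ring `h`. -/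
def IsAlgebraicOverSet {h : Type*} [DivisionRing h] (k : Set h) (x : h) : Prop :=
  ∃ (N : ℕ) (b : Fin N → h),
    (∀ y ∈ Subfield.closure (insert x k), ∃ c : Fin N → h,
      (∀ i, c i ∈ k) ∧ y = ∑ i, c i * b i) ∧
    (∀ y ∈ Subfield.closure (insert x k), ∃ c : Fin N → h,
      (∀ i, c i ∈ k) ∧ y = ∑ i, b i * c i)

section AuxLemmas
variable {h : Type*} [DivisionRing h]

theorem mySolveLeft {κ ι : Type*} [Fintype κ] [Fintype ι]
    (hlt : Fintype.card κ < Fintype.card ι) (M : κ → ι → h) :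
    ∃ a : ι → h, a ≠ 0 ∧ ∀ l, ∑ m, a m * M l m = 0 := by
  let φ : (ι → h) →ₗ[h] (κ → h) :=
    { toFun := fun a l => ∑ m, a m * M l m
      map_add' := by
        intro a b; funext l; simp [add_mul, Finset.sum_add_distrib]
      map_smul' := by
        intro c a; funext l; simp [Finset.mul_sum, mul_assoc] }
  have hni : ¬ Function.Injective φ := by
    intro hinj
    have := LinearMap.finrank_le_finrank_of_injective hinj
    rw [Module.finrank_pi, Module.finrank_pi] at this
    omega
  rw [Function.not_injective_iff] at hni
  obtain ⟨x, y, hxy, hne⟩ := hni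
  refine ⟨x - y, sub_ne_zero_of_ne hne, fun l => ?_⟩
  have : φ (x - y) = 0 := by rw [map_sub, hxy, sub_self]
  have h2 := congrFun this l
  simpa [φ, sub_mul, Finset.sum_sub_distrib] using h2

theorem mySolveRight {κ ι : Type*} [Fintype κ] [Fintype ι]
    (hlt : Fintype.card κ < Fintype.card ι) (M : κ → ι → h) :
    ∃ a : ι → h, a ≠ 0 ∧ ∀ l, ∑ m, M l m * a m = 0 := by
  obtain ⟨a, hne, hsol⟩ := mySolveLeft (h := hᵐᵒᵖ) hlt (fun l m => op (M l m))
  refine ⟨fun m => (a m).unop, ?_, ?_⟩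
  · intro hz
    apply hne
    funext m
    have : (a m).unop = 0 := congrFun hz m
    simpa [MulOpposite.unop_eq_zero_iff] using this
  · intro l
    have h2 : op (∑ m, M l m * (a m).unop) = (0 : hᵐᵒᵖ) := by
      rw [op_sum]
      calc ∑ m, op (M l m * (a m).unop) = ∑ m, a m * op (M l m) := by
            refine Finset.sum_congr rfl fun m _ => ?_
            rw [op_mul, op_unop]
          _ = 0 := hsol l
    rwa [op_eq_zero_iff] at h2

theorem myDepLeft {G : Type*} [Group G] (Ω : G →* (h ≃+* h))
    (K C : Subfield h)
    (hfixK : ∀ x : h, (∀ σ : G, Ω σ x = x) → x ∈ K)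
    {Q : Type*} [Fintype Q] (g : Q → G) (q₀ : Q)
    (hg0 : ∀ z ∈ C, Ω (g q₀) z = z)
    (hperm : ∀ τ : G, ∀ q : Q, ∃ q' : Q, ∀ z ∈ C, Ω (g q) z = Ω (τ * g q') z)
    {r : ℕ} (hr : Fintype.card Q < r) (y : Fin r → h) (hy : ∀ m, y m ∈ C) :
    ∃ a : Fin r → h, (∀ m, a m ∈ K) ∧ a ≠ 0 ∧ ∑ m, a m * y m = 0 := by
  classical
  set Sol : (Fin r → h) → Prop := fun a => ∀ q : Q, ∑ m, a m * (Ω (g q) (y m)) = 0 with hSol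
  set supp : (Fin r → h) → Finset (Fin r) := fun a => univ.filter (fun m => a m ≠ 0) with hsupp
  have hex : ∃ c : ℕ, ∃ a : Fin r → h, Sol a ∧ a ≠ 0 ∧ (supp a).card = c := by
    obtain ⟨a, hne, hsol⟩ := mySolveLeft (by simpa using hr) (fun (q : Q) m => Ω (g q) (y m))
    exact ⟨_, a, hsol, hne, rfl⟩
  classical
  obtain ⟨a, hasol, hane, hacard⟩ := Nat.find_spec hex
  -- normalize
  obtain ⟨m₀, hm₀⟩ : ∃ m, a m ≠ 0 := by
    by_contra hc; push_neg at hc; exact hane (funext fun m => hc m)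
  set a' : Fin r → h := fun m => (a m₀)⁻¹ * a m with ha'
  have ha'sol : Sol a' := by
    intro q
    have := hasol q
    calc ∑ m, (a m₀)⁻¹ * a m * Ω (g q) (y m) = (a m₀)⁻¹ * ∑ m, a m * Ω (g q) (y m) := by
          rw [Finset.mul_sum]; exact Finset.sum_congr rfl fun m _ => by rw [mul_assoc]
      _ = 0 := by rw [this, mul_zero]
  have ha'supp : supp a' = supp a := by
    ext m
    simp only [hsupp, mem_filter, mem_univ, true_and, ha']
    constructor
    · intro hne h0; exact hne (by rw [h0, mul_zero])
    · intro hne h0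
      rcases mul_eq_zero.1 h0 with h1 | h2
      · exact hm₀ (by simpa using inv_eq_zero.1 h1)
      · exact hne h2
  have ha'm₀ : a' m₀ = 1 := inv_mul_cancel₀ hm₀
  have hfixed : ∀ τ : G, ∀ m, Ω τ (a' m) = a' m := by
    intro τ
    set d : Fin r → h := fun m => Ω τ (a' m) - a' m with hd
    have hdsol : Sol d := by
      intro q
      obtain ⟨q', hq'⟩ := hperm τ q
      have key : ∑ m, Ω τ (a' m) * Ω (g q) (y m) = 0 := by
        calc ∑ m, Ω τ (a' m) * Ω (g q) (y m)
            = ∑ m, Ω τ (a' m) * Ω (τ * g q') (y m) := by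
              exact Finset.sum_congr rfl fun m _ => by rw [hq' (y m) (hy m)]
          _ = ∑ m, Ω τ (a' m) * Ω τ (Ω (g q') (y m)) := by
              refine Finset.sum_congr rfl fun m _ => ?_
              rw [map_mul Ω τ (g q')]
              rfl
          _ = ∑ m, Ω τ (a' m * Ω (g q') (y m)) := by
              exact Finset.sum_congr rfl fun m _ => (map_mul (Ω τ) _ _).symm
          _ = Ω τ (∑ m, a' m * Ω (g q') (y m)) := by rw [map_sum]
          _ = 0 := by rw [ha'sol q', map_zero]
      calc ∑ m, (Ω τ (a' m) - a' m) * Ω (g q) (y m)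
          = ∑ m, Ω τ (a' m) * Ω (g q) (y m) - ∑ m, a' m * Ω (g q) (y m) := by
            rw [← Finset.sum_sub_distrib]
            exact Finset.sum_congr rfl fun m _ => by rw [sub_mul]
        _ = 0 := by rw [key, ha'sol q, sub_zero]
    have hdzero : d = 0 := by
      by_contra hdne
      have hm₀' : d m₀ = 0 := by
        simp only [hd, ha'm₀, map_one, sub_self]
      have hsub : supp d ⊆ (supp a').erase m₀ := by
        intro m hm
        simp only [hsupp, mem_filter, mem_univ, true_and] at hm
        rw [Finset.mem_erase]
        constructor
        · intro he; rw [he] at hm; exact hm hm₀'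
        · simp only [hsupp, mem_filter, mem_univ, true_and]
          intro h0
          apply hm
          simp [hd, h0]
      have hm₀supp : m₀ ∈ supp a' := by
        simp only [hsupp, mem_filter, mem_univ, true_and, ha'm₀]; exact one_ne_zero
      have hlt : (supp d).card < Nat.find hex := by
        calc (supp d).card ≤ ((supp a').erase m₀).card := Finset.card_le_card hsub
          _ < (supp a').card := Finset.card_erase_lt_of_mem hm₀supp
          _ = Nat.find hex := by rw [ha'supp, hacard]
      exact Nat.find_min hex hlt ⟨d, hdsol, hdne, rfl⟩
    intro m
    have := congrFun hdzero m
    simpa [hd, sub_eq_zero] using this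
  refine ⟨a', fun m => hfixK _ (fun τ => hfixed τ m), ?_, ?_⟩
  · intro hz
    have := congrFun hz m₀
    rw [ha'm₀] at this
    exact one_ne_zero this
  · have := ha'sol q₀
    calc ∑ m, a' m * y m = ∑ m, a' m * Ω (g q₀) (y m) := by
          exact Finset.sum_congr rfl fun m _ => by rw [hg0 (y m) (hy m)]
      _ = 0 := this
theorem myDepRight {G : Type*} [Group G] (Ω : G →* (h ≃+* h))
    (K C : Subfield h)
    (hfixK : ∀ x : h, (∀ σ : G, Ω σ x = x) → x ∈ K)
    {Q : Type*} [Fintype Q] (g : Q → G) (q₀ : Q)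
    (hg0 : ∀ z ∈ C, Ω (g q₀) z = z)
    (hperm : ∀ τ : G, ∀ q : Q, ∃ q' : Q, ∀ z ∈ C, Ω (g q) z = Ω (τ * g q') z)
    {r : ℕ} (hr : Fintype.card Q < r) (y : Fin r → h) (hy : ∀ m, y m ∈ C) :
    ∃ a : Fin r → h, (∀ m, a m ∈ K) ∧ a ≠ 0 ∧ ∑ m, y m * a m = 0 := by
  classical
  set Sol : (Fin r → h) → Prop := fun a => ∀ q : Q, ∑ m, (Ω (g q) (y m)) * a m = 0 with hSol
  set supp : (Fin r → h) → Finset (Fin r) := fun a => univ.filter (fun m => a m ≠ 0) with hsupp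
  have hex : ∃ c : ℕ, ∃ a : Fin r → h, Sol a ∧ a ≠ 0 ∧ (supp a).card = c := by
    obtain ⟨a, hne, hsol⟩ := mySolveRight (by simpa using hr) (fun (q : Q) m => Ω (g q) (y m))
    exact ⟨_, a, hsol, hne, rfl⟩
  obtain ⟨a, hasol, hane, hacard⟩ := Nat.find_spec hex
  obtain ⟨m₀, hm₀⟩ : ∃ m, a m ≠ 0 := by
    by_contra hc; push_neg at hc; exact hane (funext fun m => hc m)
  set a' : Fin r → h := fun m => a m * (a m₀)⁻¹ with ha'
  have ha'sol : Sol a' := by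
    intro q
    have := hasol q
    calc ∑ m, Ω (g q) (y m) * (a m * (a m₀)⁻¹) = (∑ m, Ω (g q) (y m) * a m) * (a m₀)⁻¹ := by
          rw [Finset.sum_mul]; exact Finset.sum_congr rfl fun m _ => by rw [mul_assoc]
      _ = 0 := by rw [this, zero_mul]
  have ha'supp : supp a' = supp a := by
    ext m
    simp only [hsupp, mem_filter, mem_univ, true_and, ha']
    constructor
    · intro hne h0; exact hne (by rw [h0, zero_mul])
    · intro hne h0
      rcases mul_eq_zero.1 h0 with h1 | h2
      · exact hne h1
      · exact hm₀ (by simpa using inv_eq_zero.1 h2)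
  have ha'm₀ : a' m₀ = 1 := mul_inv_cancel₀ hm₀
  have hfixed : ∀ τ : G, ∀ m, Ω τ (a' m) = a' m := by
    intro τ
    set d : Fin r → h := fun m => Ω τ (a' m) - a' m with hd
    have hdsol : Sol d := by
      intro q
      obtain ⟨q', hq'⟩ := hperm τ q
      have key : ∑ m, Ω (g q) (y m) * Ω τ (a' m) = 0 := by
        calc ∑ m, Ω (g q) (y m) * Ω τ (a' m)
            = ∑ m, Ω (τ * g q') (y m) * Ω τ (a' m) := by
              exact Finset.sum_congr rfl fun m _ => by rw [hq' (y m) (hy m)]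
          _ = ∑ m, Ω τ (Ω (g q') (y m)) * Ω τ (a' m) := by
              refine Finset.sum_congr rfl fun m _ => ?_
              rw [map_mul Ω τ (g q')]
              rfl
          _ = ∑ m, Ω τ (Ω (g q') (y m) * a' m) := by
              exact Finset.sum_congr rfl fun m _ => (map_mul (Ω τ) _ _).symm
          _ = Ω τ (∑ m, Ω (g q') (y m) * a' m) := by rw [map_sum]
          _ = 0 := by rw [ha'sol q', map_zero]
      calc ∑ m, Ω (g q) (y m) * (Ω τ (a' m) - a' m)
          = ∑ m, Ω (g q) (y m) * Ω τ (a' m) - ∑ m, Ω (g q) (y m) * a' m := by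
            rw [← Finset.sum_sub_distrib]
            exact Finset.sum_congr rfl fun m _ => by rw [mul_sub]
        _ = 0 := by rw [key, ha'sol q, sub_zero]
    have hdzero : d = 0 := by
      by_contra hdne
      have hm₀' : d m₀ = 0 := by
        simp only [hd, ha'm₀, map_one, sub_self]
      have hsub : supp d ⊆ (supp a').erase m₀ := by
        intro m hm
        simp only [hsupp, mem_filter, mem_univ, true_and] at hm
        rw [Finset.mem_erase]
        constructor
        · intro he; rw [he] at hm; exact hm hm₀'
        · simp only [hsupp, mem_filter, mem_univ, true_and]
          intro h0
          apply hm
          simp [hd, h0]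
      have hm₀supp : m₀ ∈ supp a' := by
        simp only [hsupp, mem_filter, mem_univ, true_and, ha'm₀]; exact one_ne_zero
      have hlt : (supp d).card < Nat.find hex := by
        calc (supp d).card ≤ ((supp a').erase m₀).card := Finset.card_le_card hsub
          _ < (supp a').card := Finset.card_erase_lt_of_mem hm₀supp
          _ = Nat.find hex := by rw [ha'supp, hacard]
      exact Nat.find_min hex hlt ⟨d, hdsol, hdne, rfl⟩
    intro m
    have := congrFun hdzero m
    simpa [hd, sub_eq_zero] using this
  refine ⟨a', fun m => hfixK _ (fun τ => hfixed τ m), ?_, ?_⟩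
  · intro hz
    have := congrFun hz m₀
    rw [ha'm₀] at this
    exact one_ne_zero this
  · have := ha'sol q₀
    calc ∑ m, y m * a' m = ∑ m, Ω (g q₀) (y m) * a' m := by
          exact Finset.sum_congr rfl fun m _ => by rw [hg0 (y m) (hy m)]
      _ = 0 := this
theorem mySpanLeft (K C : Subfield h) (n : ℕ)
    (hdep : ∀ r, n < r → ∀ y : Fin r → h, (∀ m, y m ∈ C) →
      ∃ a : Fin r → h, (∀ m, a m ∈ K) ∧ a ≠ 0 ∧ ∑ m, a m * y m = 0) :
    ∃ d, d ≤ n ∧ ∃ b : Fin d → h, (∀ l, b l ∈ C) ∧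
      ∀ y ∈ C, ∃ c : Fin d → h, (∀ l, c l ∈ K) ∧ y = ∑ l, c l * b l := by
  classical
  set Indep : ℕ → Prop := fun m => ∃ b : Fin m → h, (∀ l, b l ∈ C) ∧
    ∀ a : Fin m → h, (∀ l, a l ∈ K) → ∑ l, a l * b l = 0 → ∀ l, a l = 0 with hIndep
  have hnotbig : ∀ m, n < m → ¬ Indep m := by
    rintro m hm ⟨b, hbC, hbInd⟩
    obtain ⟨a, haK, hane, hasum⟩ := hdep m hm b hbC
    obtain ⟨l₀, hl₀⟩ : ∃ l, a l ≠ 0 := by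
      by_contra hc; push_neg at hc; exact hane (funext fun l => hc l)
    exact hl₀ (hbInd a haK hasum l₀)
  have h0 : Indep 0 := ⟨fun l => l.elim0, fun l => l.elim0, fun a _ _ l => l.elim0⟩
  set d := Nat.findGreatest Indep n with hdd
  have hd : Indep d := Nat.findGreatest_spec (Nat.zero_le n) h0
  have hdn : d ≤ n := Nat.findGreatest_le n
  have hnot : ¬ Indep (d + 1) := by
    rcases le_or_gt (d+1) n with hle | hgt
    · exact Nat.findGreatest_is_greatest (Nat.lt_succ_self d) hle
    · exact hnotbig _ hgt
  obtain ⟨b, hbC, hbInd⟩ := hd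
  refine ⟨d, hdn, b, hbC, ?_⟩
  intro y hy
  by_contra hno
  push_neg at hno
  apply hnot
  refine ⟨Fin.snoc b y, ?_, ?_⟩
  · intro l
    refine Fin.lastCases ?_ ?_ l
    · rw [Fin.snoc_last]; exact hy
    · intro k; rw [Fin.snoc_castSucc]; exact hbC k
  · intro a haK hasum
    rw [Fin.sum_univ_castSucc] at hasum
    simp only [Fin.snoc_castSucc, Fin.snoc_last] at hasum
    by_cases hlast : a (Fin.last d) = 0
    · rw [hlast, zero_mul, add_zero] at hasum
      have := hbInd (fun l => a l.castSucc) (fun l => haK _) hasum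
      intro l
      refine Fin.lastCases hlast (fun k => this k) l
    · exfalso
      have hyrep : y = ∑ l, (-((a (Fin.last d))⁻¹ * a l.castSucc)) * b l := by
        have h1 : a (Fin.last d) * y = - ∑ l, a l.castSucc * b l := by
          rw [eq_neg_iff_add_eq_zero, add_comm]; exact hasum
        have h2 : y = (a (Fin.last d))⁻¹ * - ∑ l, a l.castSucc * b l := by
          rw [← h1, inv_mul_cancel_left₀ hlast]
        rw [h2, mul_neg, Finset.mul_sum, ← Finset.sum_neg_distrib]
        exact Finset.sum_congr rfl fun l _ => by rw [neg_mul, mul_assoc]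
      exact hno (fun l => -((a (Fin.last d))⁻¹ * a l.castSucc))
        (fun l => neg_mem (mul_mem (inv_mem (haK _)) (haK _))) hyrep

theorem mySpanRight (K C : Subfield h) (n : ℕ)
    (hdep : ∀ r, n < r → ∀ y : Fin r → h, (∀ m, y m ∈ C) →
      ∃ a : Fin r → h, (∀ m, a m ∈ K) ∧ a ≠ 0 ∧ ∑ m, y m * a m = 0) :
    ∃ d, d ≤ n ∧ ∃ b : Fin d → h, (∀ l, b l ∈ C) ∧
      ∀ y ∈ C, ∃ c : Fin d → h, (∀ l, c l ∈ K) ∧ y = ∑ l, b l * c l := by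
  classical
  set Indep : ℕ → Prop := fun m => ∃ b : Fin m → h, (∀ l, b l ∈ C) ∧
    ∀ a : Fin m → h, (∀ l, a l ∈ K) → ∑ l, b l * a l = 0 → ∀ l, a l = 0 with hIndep
  have hnotbig : ∀ m, n < m → ¬ Indep m := by
    rintro m hm ⟨b, hbC, hbInd⟩
    obtain ⟨a, haK, hane, hasum⟩ := hdep m hm b hbC
    obtain ⟨l₀, hl₀⟩ : ∃ l, a l ≠ 0 := by
      by_contra hc; push_neg at hc; exact hane (funext fun l => hc l)
    exact hl₀ (hbInd a haK hasum l₀)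
  have h0 : Indep 0 := ⟨fun l => l.elim0, fun l => l.elim0, fun a _ _ l => l.elim0⟩
  set d := Nat.findGreatest Indep n with hdd
  have hd : Indep d := Nat.findGreatest_spec (Nat.zero_le n) h0
  have hdn : d ≤ n := Nat.findGreatest_le n
  have hnot : ¬ Indep (d + 1) := by
    rcases le_or_gt (d+1) n with hle | hgt
    · exact Nat.findGreatest_is_greatest (Nat.lt_succ_self d) hle
    · exact hnotbig _ hgt
  obtain ⟨b, hbC, hbInd⟩ := hd
  refine ⟨d, hdn, b, hbC, ?_⟩
  intro y hy
  by_contra hno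
  push_neg at hno
  apply hnot
  refine ⟨Fin.snoc b y, ?_, ?_⟩
  · intro l
    refine Fin.lastCases ?_ ?_ l
    · rw [Fin.snoc_last]; exact hy
    · intro k; rw [Fin.snoc_castSucc]; exact hbC k
  · intro a haK hasum
    rw [Fin.sum_univ_castSucc] at hasum
    simp only [Fin.snoc_castSucc, Fin.snoc_last] at hasum
    by_cases hlast : a (Fin.last d) = 0
    · rw [hlast, mul_zero, add_zero] at hasum
      have := hbInd (fun l => a l.castSucc) (fun l => haK _) hasum
      intro l
      refine Fin.lastCases hlast (fun k => this k) l
    · exfalso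
      have hyrep : y = ∑ l, b l * (-(a l.castSucc * (a (Fin.last d))⁻¹)) := by
        have h1 : y * a (Fin.last d) = - ∑ l, b l * a l.castSucc := by
          rw [eq_neg_iff_add_eq_zero, add_comm]; exact hasum
        have h2 : y = (- ∑ l, b l * a l.castSucc) * (a (Fin.last d))⁻¹ := by
          rw [← h1, mul_inv_cancel_right₀ hlast]
        rw [h2, neg_mul, Finset.sum_mul, ← Finset.sum_neg_distrib]
        exact Finset.sum_congr rfl fun l _ => by rw [mul_neg, mul_assoc]
      exact hno (fun l => -(a l.castSucc * (a (Fin.last d))⁻¹))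
        (fun l => neg_mem (mul_mem (haK _) (inv_mem (haK _)))) hyrep
theorem myDedekind {Q : Type*} [Fintype Q]
    (K C : Subfield h) (hKC : K ≤ C)
    (g : Q → (h ≃+* h)) (hgK : ∀ q, ∀ c ∈ K, g q c = c)
    (hginj : ∀ q q' : Q, (∀ z ∈ C, g q z = g q' z) → q = q')
    (hout : ∀ u : h, u ≠ 0 → (∀ a ∈ K, u * a = a * u) → ∀ x : h, u * x = x * u)
    (a : Q → h) (ha : ∀ z ∈ C, ∑ q, g q z * a q = 0) : a = 0 := by
  classical
  by_contra hane
  set Rel : (Q → h) → Prop := fun w => ∀ z ∈ C, ∑ q, g q z * w q = 0 with hRel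
  set supp : (Q → h) → Finset Q := fun w => univ.filter (fun q => w q ≠ 0) with hsupp
  have hex : ∃ c : ℕ, ∃ w : Q → h, Rel w ∧ w ≠ 0 ∧ (supp w).card = c := ⟨_, a, ha, hane, rfl⟩
  obtain ⟨w, hwrel, hwne, hwcard⟩ := Nat.find_spec hex
  obtain ⟨q₀, hq₀⟩ : ∃ q, w q ≠ 0 := by
    by_contra hc; push_neg at hc; exact hwne (funext fun q => hc q)
  have hstep : ∀ y ∈ C, ∀ q, g q y * w q = w q * ((w q₀)⁻¹ * (g q₀ y) * w q₀) := by
    intro y hyC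
    set t : h := (w q₀)⁻¹ * (g q₀ y) * w q₀ with ht
    set wy : Q → h := fun q => g q y * w q - w q * t with hwy
    have hwyrel : Rel wy := by
      intro z hz
      have h1 : ∑ q, g q z * (g q y * w q) = 0 := by
        have := hwrel (z * y) (mul_mem hz hyC)
        calc ∑ q, g q z * (g q y * w q) = ∑ q, g q (z * y) * w q := by
              refine Finset.sum_congr rfl fun q _ => ?_
              rw [map_mul, mul_assoc]
          _ = 0 := this
      have h2 : ∑ q, g q z * (w q * t) = 0 := by
        calc ∑ q, g q z * (w q * t) = (∑ q, g q z * w q) * t := by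
              rw [Finset.sum_mul]; exact Finset.sum_congr rfl fun q _ => by rw [mul_assoc]
          _ = 0 := by rw [hwrel z hz, zero_mul]
      calc ∑ q, g q z * (g q y * w q - w q * t)
          = ∑ q, g q z * (g q y * w q) - ∑ q, g q z * (w q * t) := by
            rw [← Finset.sum_sub_distrib]
            exact Finset.sum_congr rfl fun q _ => by rw [mul_sub]
        _ = 0 := by rw [h1, h2, sub_zero]
    have hwyq₀ : wy q₀ = 0 := by
      simp only [hwy, ht]
      rw [← mul_assoc, mul_inv_cancel_left₀ hq₀, sub_self]
    have hwyzero : wy = 0 := by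
      by_contra hwyne
      have hsub : supp wy ⊆ (supp w).erase q₀ := by
        intro q hq
        simp only [hsupp, mem_filter, mem_univ, true_and] at hq
        rw [Finset.mem_erase]
        constructor
        · intro he; rw [he] at hq; exact hq hwyq₀
        · simp only [hsupp, mem_filter, mem_univ, true_and]
          intro h0
          apply hq
          simp [hwy, h0]
      have hq₀supp : q₀ ∈ supp w := by
        simp only [hsupp, mem_filter, mem_univ, true_and]; exact hq₀
      have hlt : (supp wy).card < Nat.find hex := by
        calc (supp wy).card ≤ ((supp w).erase q₀).card := Finset.card_le_card hsub
          _ < (supp w).card := Finset.card_erase_lt_of_mem hq₀supp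
          _ = Nat.find hex := hwcard
      exact Nat.find_min hex hlt ⟨wy, hwyrel, hwyne, rfl⟩
    intro q
    have := congrFun hwyzero q
    simpa [hwy, sub_eq_zero] using this
  -- now each q in the support acts like q₀ on C
  have hsupp_sub : ∀ q, w q ≠ 0 → q = q₀ := by
    intro q hwq
    set v : h := w q * (w q₀)⁻¹ with hv
    have hvne : v ≠ 0 := mul_ne_zero hwq (inv_ne_zero hq₀)
    have hvK : ∀ y ∈ K, v * y = y * v := by
      intro y hyK
      have h1 := hstep y (hKC hyK) q
      rw [hgK q y hyK, hgK q₀ y hyK] at h1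
      calc v * y = w q * ((w q₀)⁻¹ * y) := by rw [hv, mul_assoc]
        _ = w q * ((w q₀)⁻¹ * y * w q₀ * (w q₀)⁻¹) := by rw [mul_inv_cancel_right₀ hq₀]
        _ = w q * ((w q₀)⁻¹ * y * w q₀) * (w q₀)⁻¹ := (mul_assoc _ _ _).symm
        _ = y * w q * (w q₀)⁻¹ := by rw [← h1]
        _ = y * v := by rw [hv, mul_assoc]
    have hvcentral : ∀ x : h, v * x = x * v := hout v hvne hvK
    apply hginj
    intro z hz
    have h1 := hstep z hz q
    have h5 : g q z * v = v * g q₀ z := by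
      calc g q z * v = g q z * w q * (w q₀)⁻¹ := by rw [hv, mul_assoc]
        _ = w q * ((w q₀)⁻¹ * g q₀ z * w q₀) * (w q₀)⁻¹ := by rw [h1]
        _ = w q * ((w q₀)⁻¹ * g q₀ z * w q₀ * (w q₀)⁻¹) := mul_assoc _ _ _
        _ = w q * ((w q₀)⁻¹ * g q₀ z) := by rw [mul_inv_cancel_right₀ hq₀]
        _ = w q * (w q₀)⁻¹ * g q₀ z := (mul_assoc _ _ _).symm
        _ = v * g q₀ z := by rw [hv]
    rw [hvcentral (g q₀ z)] at h5
    exact mul_right_cancel₀ hvne h5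
  have hfinal := hwrel 1 (one_mem C)
  have : ∑ q, g q 1 * w q = w q₀ := by
    rw [Finset.sum_eq_single q₀]
    · rw [map_one, one_mul]
    · intro q _ hq
      have : w q = 0 := by
        by_contra hc
        exact hq (hsupp_sub q hc)
      rw [this, mul_zero]
    · intro habs; exact absurd (Finset.mem_univ q₀) habs
  rw [this] at hfinal
  exact hq₀ hfinal


end AuxLemmas

set_option maxHeartbeats 1600000 in
/-- Directed limits of algebraic outer Galois extensions of division rings with constant
profinite Galois group `G`.  The directed systems `(hᵢ)`, `(kᵢ)` and the colimit `h` are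
modelled concretely: `h` is a division ring exhausted by subdivision rings `hs i`
(`⋃ᵢ hs i = h`), `ks i ≤ hs i`, and `ω i : G → (hs i → hs i)` gives for each `i` a
faithful action of `G` on `hs i` by ring automorphisms with fixed field `ks i`
(an algebraic outer Galois extension with open stabilizers, i.e. `ωᵢ : G ≅ Gal(hᵢ/kᵢ)` as
profinite groups), compatibly with the transition maps (inclusions).  Then `h/k`, with
`k = ⋃ᵢ ks i`, is an algebraic outer Galois extension with Galois group `G`, compatibly
with the `ωᵢ`. -/
theorem directed_limit_outer_galois
    (I : Type*) [Preorder I] [IsDirected I (· ≤ ·)] [Nonempty I]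
    (G : Type*) [Group G] [TopologicalSpace G] [IsTopologicalGroup G]
    [CompactSpace G] [T2Space G] [TotallyDisconnectedSpace G]
    (h : Type*) [DivisionRing h]
    (hs ks : I → Subfield h) (hmono : Monotone hs) (kmono : Monotone ks)
    (hks : ∀ i, ks i ≤ hs i) (hcover : ∀ x : h, ∃ i, x ∈ hs i)
    (ω : I → G → h → h)
    (hmaps : ∀ i σ, ∀ x ∈ hs i, ω i σ x ∈ hs i)
    (hadd : ∀ i σ, ∀ x ∈ hs i, ∀ y ∈ hs i, ω i σ (x + y) = ω i σ x + ω i σ y)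
    (hmul : ∀ i σ, ∀ x ∈ hs i, ∀ y ∈ hs i, ω i σ (x * y) = ω i σ x * ω i σ y)
    (hone : ∀ i σ, ω i σ 1 = 1)
    (hid : ∀ i, ∀ x ∈ hs i, ω i 1 x = x)
    (hcomp : ∀ i (σ τ : G), ∀ x ∈ hs i, ω i (σ * τ) x = ω i σ (ω i τ x))
    (hsurj : ∀ i σ, ∀ y ∈ hs i, ∃ x ∈ hs i, ω i σ x = y)
    (hfix : ∀ i, ∀ x ∈ hs i, (∀ σ : G, ω i σ x = x) ↔ x ∈ ks i)
    (hcompat : ∀ i j, i ≤ j → ∀ (σ : G), ∀ x ∈ hs i, ω j σ x = ω i σ x)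
    (houter : ∀ i, ∀ u ∈ hs i, u ≠ 0 →
      (∀ a ∈ ks i, u * a = a * u) → ∀ x ∈ hs i, u * x = x * u)
    (halg : ∀ i, ∀ x ∈ hs i, IsAlgebraicOverSet (ks i : Set h) x)
    (hopen : ∀ i, ∀ x ∈ hs i, IsOpen {σ : G | ω i σ x = x})
    (hfaithful : ∀ σ : G, (∀ i, ∀ x ∈ hs i, ω i σ x = x) → σ = 1) :
    ∃ Ω : G →* (h ≃+* h),
      (∀ (σ : G) i, ∀ x ∈ hs i, Ω σ x = ω i σ x) ∧
      (∀ x : h, (∀ σ : G, Ω σ x = x) ↔ ∃ i, x ∈ ks i) ∧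
      (∀ x : h, IsAlgebraicOverSet {y : h | ∃ i, y ∈ ks i} x) ∧
      (∀ u : h, u ≠ 0 → (∀ a : h, (∃ i, a ∈ ks i) → u * a = a * u) →
        ∀ x : h, u * x = x * u) ∧
      (∀ f : h ≃+* h, (∀ a : h, (∃ i, a ∈ ks i) → f a = a) →
        ∃ σ : G, ∀ x : h, f x = Ω σ x) := by
  classical
  choose idx hidx using hcover
  set Φ : G → h → h := fun σ x => ω (idx x) σ x with hΦ
  have W : ∀ (σ : G) (i : I) (x : h), x ∈ hs i → Φ σ x = ω i σ x := by
    intro σ i x hx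
    obtain ⟨j, hj1, hj2⟩ := directed_of (· ≤ ·) (idx x) i
    calc Φ σ x = ω (idx x) σ x := rfl
      _ = ω j σ x := (hcompat (idx x) j hj1 σ x (hidx x)).symm
      _ = ω i σ x := by
        rw [hcompat i j hj2 σ x hx]
  have Φmem : ∀ (σ : G) (i : I), ∀ x ∈ hs i, Φ σ x ∈ hs i := by
    intro σ i x hx
    rw [W σ i x hx]; exact hmaps i σ x hx
  have Φadd : ∀ (σ : G) (x y : h), Φ σ (x + y) = Φ σ x + Φ σ y := by
    intro σ x y
    obtain ⟨k, hk1, hk2⟩ := directed_of (· ≤ ·) (idx x) (idx y)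
    have hx : x ∈ hs k := hmono hk1 (hidx x)
    have hy : y ∈ hs k := hmono hk2 (hidx y)
    rw [W σ k _ (add_mem hx hy), W σ k x hx, W σ k y hy]
    exact hadd k σ x hx y hy
  have Φmul : ∀ (σ : G) (x y : h), Φ σ (x * y) = Φ σ x * Φ σ y := by
    intro σ x y
    obtain ⟨k, hk1, hk2⟩ := directed_of (· ≤ ·) (idx x) (idx y)
    have hx : x ∈ hs k := hmono hk1 (hidx x)
    have hy : y ∈ hs k := hmono hk2 (hidx y)
    rw [W σ k _ (mul_mem hx hy), W σ k x hx, W σ k y hy]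
    exact hmul k σ x hx y hy
  have Φid : ∀ x : h, Φ 1 x = x := fun x => hid (idx x) x (hidx x)
  have Φcomp : ∀ (σ τ : G) (x : h), Φ (σ * τ) x = Φ σ (Φ τ x) := by
    intro σ τ x
    have hx := hidx x
    have h1 : Φ τ x = ω (idx x) τ x := W τ (idx x) x hx
    have h2 : Φ σ (Φ τ x) = ω (idx x) σ (ω (idx x) τ x) := by
      rw [h1]; exact W σ (idx x) _ (hmaps _ τ x hx)
    rw [h2, W (σ * τ) (idx x) x hx]
    exact hcomp (idx x) σ τ x hx
  have Φlinv : ∀ (σ : G) (x : h), Φ σ⁻¹ (Φ σ x) = x := by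
    intro σ x
    rw [← Φcomp σ⁻¹ σ x, inv_mul_cancel, Φid]
  have Φrinv : ∀ (σ : G) (x : h), Φ σ (Φ σ⁻¹ x) = x := by
    intro σ x
    rw [← Φcomp σ σ⁻¹ x, mul_inv_cancel, Φid]
  set Ωe : G → (h ≃+* h) := fun σ =>
    { toFun := Φ σ
      invFun := Φ σ⁻¹
      left_inv := Φlinv σ
      right_inv := Φrinv σ
      map_add' := Φadd σ
      map_mul' := Φmul σ } with hΩe
  set Ω : G →* (h ≃+* h) := MonoidHom.mk' Ωe (by
    intro σ τ
    apply RingEquiv.ext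
    intro x
    show Φ (σ * τ) x = Φ σ (Φ τ x)
    exact Φcomp σ τ x) with hΩdef
  have Ωapp : ∀ (σ : G) (x : h), Ω σ x = Φ σ x := fun σ x => rfl
  -- conclusion 1
  have concl1 : ∀ (σ : G) (i : I), ∀ x ∈ hs i, Ω σ x = ω i σ x := by
    intro σ i x hx; rw [Ωapp]; exact W σ i x hx
  -- conclusion 2
  have concl2 : ∀ x : h, (∀ σ : G, Ω σ x = x) ↔ ∃ i, x ∈ ks i := by
    intro x
    constructor
    · intro hfx
      refine ⟨idx x, ((hfix (idx x) x (hidx x)).1 ?_)⟩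
      intro σ
      rw [← W σ (idx x) x (hidx x)]
      exact hfx σ
    · rintro ⟨i, hi⟩ σ
      rw [concl1 σ i x (hks i hi)]
      exact (hfix i x (hks i hi)).2 hi σ
  -- conclusion 4 : outerness at the colimit
  have concl4 : ∀ u : h, u ≠ 0 → (∀ a : h, (∃ i, a ∈ ks i) → u * a = a * u) →
      ∀ x : h, u * x = x * u := by
    intro u hu hcomm x
    obtain ⟨k, hk1, hk2⟩ := directed_of (· ≤ ·) (idx u) (idx x)
    have hu' : u ∈ hs k := hmono hk1 (hidx u)
    have hx' : x ∈ hs k := hmono hk2 (hidx x)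
    exact houter k u hu' hu (fun a ha => hcomm a ⟨k, ha⟩) x hx'
  -- the colimit bottom field
  set K : Subfield h :=
    { carrier := {y : h | ∃ i, y ∈ ks i}
      zero_mem' := ⟨Classical.arbitrary I, zero_mem _⟩
      one_mem' := ⟨Classical.arbitrary I, one_mem _⟩
      add_mem' := by
        rintro a b ⟨i, hi⟩ ⟨j, hj⟩
        obtain ⟨k, hk1, hk2⟩ := directed_of (· ≤ ·) i j
        exact ⟨k, add_mem (kmono hk1 hi) (kmono hk2 hj)⟩
      mul_mem' := by
        rintro a b ⟨i, hi⟩ ⟨j, hj⟩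
        obtain ⟨k, hk1, hk2⟩ := directed_of (· ≤ ·) i j
        exact ⟨k, mul_mem (kmono hk1 hi) (kmono hk2 hj)⟩
      neg_mem' := by rintro a ⟨i, hi⟩; exact ⟨i, neg_mem hi⟩
      inv_mem' := by rintro a ⟨i, hi⟩; exact ⟨i, inv_mem hi⟩ } with hK
  have hKmem : ∀ x : h, x ∈ K ↔ ∃ i, x ∈ ks i := fun x => Iff.rfl
  have hKset : {y : h | ∃ i, y ∈ ks i} = (K : Set h) := rfl
  have hKfix : ∀ (σ : G), ∀ a ∈ K, Ω σ a = a := by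
    intro σ a ha
    exact (concl2 a).2 ha σ
  have hfixK : ∀ x : h, (∀ σ : G, Ω σ x = x) → x ∈ K := fun x hx => (concl2 x).1 hx
  -- stabilizers are open
  have hstabopen : ∀ x : h, IsOpen {σ : G | Ω σ x = x} := by
    intro x
    have : {σ : G | Ω σ x = x} = {σ : G | ω (idx x) σ x = x} := rfl
    rw [this]
    exact hopen (idx x) x (hidx x)
  -- fixed subfield of a ring automorphism
  set Fix : (h ≃+* h) → Subfield h := fun f =>
    { carrier := {z : h | f z = z}
      zero_mem' := map_zero f
      one_mem' := map_one f
      add_mem' := by intro a b ha hb; show f (a + b) = a + b; rw [map_add, ha, hb]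
      mul_mem' := by intro a b ha hb; show f (a * b) = a * b; rw [map_mul, ha, hb]
      neg_mem' := by intro a ha; show f (-a) = -a; rw [map_neg, ha]
      inv_mem' := by intro a ha; show f a⁻¹ = a⁻¹; rw [map_inv₀, ha] } with hFix
  refine ⟨Ω, concl1, concl2, ?_, concl4, ?_⟩
  · -- conclusion 3 : algebraicity over the union of the ks
    intro x
    set C : Subfield h := Subfield.closure (insert x {y : h | ∃ i, y ∈ ks i}) with hC
    set U : Subgroup G :=
      { carrier := {σ : G | Ω σ x = x}
        one_mem' := by show Ω 1 x = x; rw [map_one]; rfl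
        mul_mem' := by
          intro σ τ hσ hτ
          show Ω (σ * τ) x = x
          rw [map_mul]
          show Ω σ (Ω τ x) = x
          rw [hτ, hσ]
        inv_mem' := by
          intro σ hσ
          show Ω σ⁻¹ x = x
          conv_lhs => rw [← hσ]
          show (Ω σ⁻¹ * Ω σ) x = x
          rw [← map_mul, inv_mul_cancel, map_one]
          rfl } with hU
    haveI : Finite (G ⧸ U) := Subgroup.quotient_finite_of_isOpen U (hstabopen x)
    haveI : Fintype (G ⧸ U) := Fintype.ofFinite _
    have hUfix : ∀ u ∈ U, ∀ z ∈ C, Ω u z = z := by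
      intro u hu z hz
      have hsub : C ≤ Fix (Ω u) := by
        rw [hC]
        apply Subfield.closure_le.2
        intro w hw
        rcases Set.mem_insert_iff.1 hw with hw | hw
        · subst hw; exact hu
        · exact hKfix u w hw
      exact hsub hz
    set g : G ⧸ U → G := fun q => Quotient.out q with hg
    have hgmk : ∀ q : G ⧸ U, QuotientGroup.mk (g q) = q := fun q => Quotient.out_eq' q
    set q₀ : G ⧸ U := QuotientGroup.mk (1 : G) with hq₀def
    have hg0 : ∀ z ∈ C, Ω (g q₀) z = z := by
      intro z hz
      have h1 : (g q₀)⁻¹ * 1 ∈ U := QuotientGroup.eq.1 (hgmk q₀)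
      rw [mul_one] at h1
      exact hUfix _ (U.inv_mem_iff.1 h1) z hz
    have hperm : ∀ τ : G, ∀ q : G ⧸ U, ∃ q', ∀ z ∈ C, Ω (g q) z = Ω (τ * g q') z := by
      intro τ q
      refine ⟨QuotientGroup.mk (τ⁻¹ * g q), fun z hz => ?_⟩
      set q' : G ⧸ U := QuotientGroup.mk (τ⁻¹ * g q) with hq'
      have hu : (g q')⁻¹ * (τ⁻¹ * g q) ∈ U := by
        rw [← QuotientGroup.eq]
        exact hgmk q'
      have hgq : (τ * g q') * ((g q')⁻¹ * (τ⁻¹ * g q)) = g q := by group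
      calc Ω (g q) z = Ω ((τ * g q') * ((g q')⁻¹ * (τ⁻¹ * g q))) z := by rw [hgq]
        _ = Ω (τ * g q') (Ω ((g q')⁻¹ * (τ⁻¹ * g q)) z) := by rw [map_mul]; rfl
        _ = Ω (τ * g q') z := by rw [hUfix _ hu z hz]
    set n := Fintype.card (G ⧸ U) with hn
    have hdepL : ∀ r, n < r → ∀ y : Fin r → h, (∀ m, y m ∈ C) →
        ∃ a : Fin r → h, (∀ m, a m ∈ K) ∧ a ≠ 0 ∧ ∑ m, a m * y m = 0 := by
      intro r hr y hy
      exact myDepLeft Ω K C hfixK g q₀ hg0 hperm hr y hy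
    have hdepR : ∀ r, n < r → ∀ y : Fin r → h, (∀ m, y m ∈ C) →
        ∃ a : Fin r → h, (∀ m, a m ∈ K) ∧ a ≠ 0 ∧ ∑ m, y m * a m = 0 := by
      intro r hr y hy
      exact myDepRight Ω K C hfixK g q₀ hg0 hperm hr y hy
    obtain ⟨dL, hdLn, bL, hbLC, hbLspan⟩ := mySpanLeft K C n hdepL
    obtain ⟨dR, hdRn, bR, hbRC, hbRspan⟩ := mySpanRight K C n hdepR
    refine ⟨dL + dR, Fin.append bL bR, ?_, ?_⟩
    · intro y hy
      obtain ⟨c, hcK, hcrep⟩ := hbLspan y hy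
      refine ⟨Fin.append c (fun _ => 0), ?_, ?_⟩
      · intro i
        refine Fin.addCases (fun j => ?_) (fun j => ?_) i
        · rw [Fin.append_left]; exact hcK j
        · rw [Fin.append_right]; exact K.zero_mem
      · rw [Fin.sum_univ_add]
        have hright : ∀ j : Fin dR,
            Fin.append c (fun _ => (0:h)) (Fin.natAdd dL j) *
              Fin.append bL bR (Fin.natAdd dL j) = 0 := by
          intro j
          rw [Fin.append_right]
          exact zero_mul _
        rw [Finset.sum_congr rfl (fun j _ => hright j), Finset.sum_const_zero, add_zero]
        rw [hcrep]
        refine Finset.sum_congr rfl fun j _ => ?_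
        rw [Fin.append_left, Fin.append_left]
    · intro y hy
      obtain ⟨c, hcK, hcrep⟩ := hbRspan y hy
      refine ⟨Fin.append (fun _ => 0) c, ?_, ?_⟩
      · intro i
        refine Fin.addCases (fun j => ?_) (fun j => ?_) i
        · rw [Fin.append_left]; exact K.zero_mem
        · rw [Fin.append_right]; exact hcK j
      · rw [Fin.sum_univ_add]
        have hleft : ∀ j : Fin dL,
            Fin.append bL bR (Fin.castAdd dR j) *
              Fin.append (fun _ => (0:h)) c (Fin.castAdd dR j) = 0 := by
          intro j
          rw [Fin.append_left (fun _ => (0:h))]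
          exact mul_zero _
        rw [Finset.sum_congr rfl (fun j _ => hleft j), Finset.sum_const_zero, zero_add]
        rw [hcrep]
        refine Finset.sum_congr rfl fun j _ => ?_
        rw [Fin.append_right, Fin.append_right]
  · -- conclusion 5 : every K-automorphism comes from G
    intro f hf
    -- Step A : agreement with some Ω σ on any finite set
    have hA : ∀ s : Finset h, ∃ σ : G, ∀ z ∈ s, f z = Ω σ z := by
      intro s
      set C : Subfield h := Subfield.closure (↑s ∪ (K : Set h)) with hC
      have hsC : ∀ z ∈ s, z ∈ C := fun z hz =>
        Subfield.subset_closure (Set.mem_union_left _ hz)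
      have hKC : K ≤ C := fun a ha => Subfield.subset_closure (Set.mem_union_right _ ha)
      set U : Subgroup G :=
        { carrier := {σ : G | ∀ z ∈ s, Ω σ z = z}
          one_mem' := by intro z _; rw [map_one]; rfl
          mul_mem' := by
            intro σ τ hσ hτ z hz
            rw [map_mul]
            show Ω σ (Ω τ z) = z
            rw [hτ z hz, hσ z hz]
          inv_mem' := by
            intro σ hσ z hz
            show Ω σ⁻¹ z = z
            conv_lhs => rw [← hσ z hz]
            show (Ω σ⁻¹ * Ω σ) z = z
            rw [← map_mul, inv_mul_cancel, map_one]
            rfl } with hU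
      have hUopen : IsOpen (U : Set G) := by
        have hUeq : (U : Set G) = ⋂ z ∈ s, {σ : G | Ω σ z = z} := by
          ext σ
          simp only [Set.mem_iInter, Set.mem_setOf_eq]
          rfl
        rw [hUeq]
        exact isOpen_biInter_finset fun z _ => hstabopen z
      haveI : Finite (G ⧸ U) := Subgroup.quotient_finite_of_isOpen U hUopen
      haveI : Fintype (G ⧸ U) := Fintype.ofFinite _
      have hUfix : ∀ u ∈ U, ∀ z ∈ C, Ω u z = z := by
        intro u hu z hz
        have hsub : C ≤ Fix (Ω u) := by
          rw [hC]
          apply Subfield.closure_le.2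
          intro w hw
          rcases hw with hw | hw
          · exact hu w hw
          · exact hKfix u w hw
        exact hsub hz
      set g : G ⧸ U → G := fun q => Quotient.out q with hg
      have hgmk : ∀ q : G ⧸ U, QuotientGroup.mk (g q) = q := fun q => Quotient.out_eq' q
      set q₀ : G ⧸ U := QuotientGroup.mk (1 : G) with hq₀def
      have hg0 : ∀ z ∈ C, Ω (g q₀) z = z := by
        intro z hz
        have h1 : (g q₀)⁻¹ * 1 ∈ U := QuotientGroup.eq.1 (hgmk q₀)
        rw [mul_one] at h1
        exact hUfix _ (U.inv_mem_iff.1 h1) z hz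
      have hperm : ∀ τ : G, ∀ q : G ⧸ U, ∃ q', ∀ z ∈ C, Ω (g q) z = Ω (τ * g q') z := by
        intro τ q
        refine ⟨QuotientGroup.mk (τ⁻¹ * g q), fun z hz => ?_⟩
        set q' : G ⧸ U := QuotientGroup.mk (τ⁻¹ * g q) with hq'
        have hu : (g q')⁻¹ * (τ⁻¹ * g q) ∈ U := by
          rw [← QuotientGroup.eq]
          exact hgmk q'
        have hgq : (τ * g q') * ((g q')⁻¹ * (τ⁻¹ * g q)) = g q := by group
        calc Ω (g q) z = Ω ((τ * g q') * ((g q')⁻¹ * (τ⁻¹ * g q))) z := by rw [hgq]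
          _ = Ω (τ * g q') (Ω ((g q')⁻¹ * (τ⁻¹ * g q)) z) := by rw [map_mul]; rfl
          _ = Ω (τ * g q') z := by rw [hUfix _ hu z hz]
      set n := Fintype.card (G ⧸ U) with hn
      have hdepL : ∀ r, n < r → ∀ y : Fin r → h, (∀ m, y m ∈ C) →
          ∃ a : Fin r → h, (∀ m, a m ∈ K) ∧ a ≠ 0 ∧ ∑ m, a m * y m = 0 := by
        intro r hr y hy
        exact myDepLeft Ω K C hfixK g q₀ hg0 hperm hr y hy
      obtain ⟨d, hdn, b, hbC, hbspan⟩ := mySpanLeft K C n hdepL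
      have hgKfix : ∀ q : G ⧸ U, ∀ c ∈ K, Ω (g q) c = c := fun q c hc => hKfix (g q) c hc
      have hginj : ∀ q q' : G ⧸ U, (∀ z ∈ C, Ω (g q) z = Ω (g q') z) → q = q' := by
        intro q q' hqq
        have hu : (g q')⁻¹ * g q ∈ U := by
          intro z hz
          show Ω ((g q')⁻¹ * g q) z = z
          rw [map_mul]
          show Ω (g q')⁻¹ (Ω (g q) z) = z
          rw [hqq z (hsC z hz)]
          have h2 : Ω (g q')⁻¹ (Ω (g q') z) = Ω ((g q')⁻¹ * g q') z := by rw [map_mul]; rfl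
          rw [h2, inv_mul_cancel, map_one]
          rfl
        have h3 : QuotientGroup.mk (g q') = QuotientGroup.mk (g q) := QuotientGroup.eq.2 hu
        rw [hgmk, hgmk] at h3
        exact h3.symm
      -- expansion along the spanning family
      have hswap : ∀ (v : (G ⧸ U) → h) (z : h) (c : Fin d → h), (∀ l, c l ∈ K) →
          z = ∑ l, c l * b l →
          ∑ q, Ω (g q) z * v q = ∑ l, c l * ∑ q, Ω (g q) (b l) * v q := by
        intro v z c hcK hcrep
        have hexp : ∀ q : G ⧸ U, Ω (g q) z = ∑ l, c l * Ω (g q) (b l) := by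
          intro q
          rw [hcrep, map_sum]
          refine Finset.sum_congr rfl fun l _ => ?_
          rw [map_mul, hgKfix q (c l) (hcK l)]
        calc ∑ q, Ω (g q) z * v q
            = ∑ q, ∑ l, c l * (Ω (g q) (b l) * v q) := by
              refine Finset.sum_congr rfl fun q _ => ?_
              rw [hexp q, Finset.sum_mul]
              exact Finset.sum_congr rfl fun l _ => mul_assoc _ _ _
          _ = ∑ l, ∑ q, c l * (Ω (g q) (b l) * v q) := Finset.sum_comm
          _ = ∑ l, c l * ∑ q, Ω (g q) (b l) * v q := by
              refine Finset.sum_congr rfl fun l _ => (Finset.mul_sum _ _ _).symm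
      -- the evaluation map is injective, hence surjective
      set Θ : ((G ⧸ U) → h) →ₗ[hᵐᵒᵖ] (Fin d → h) :=
        { toFun := fun v l => ∑ q, Ω (g q) (b l) * v q
          map_add' := by
            intro v w
            funext l
            simp only [Pi.add_apply, mul_add, Finset.sum_add_distrib]
          map_smul' := by
            intro c v
            funext l
            simp only [Pi.smul_apply, MulOpposite.smul_eq_mul_unop, RingHom.id_apply]
            rw [Finset.sum_mul]
            exact Finset.sum_congr rfl fun q _ => (mul_assoc _ _ _).symm } with hΘ
      have hker : ∀ v : (G ⧸ U) → h, Θ v = 0 → v = 0 := by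
        intro v hv0
        apply myDedekind K C hKC (fun q => Ω (g q)) hgKfix hginj concl4 v
        intro z hz
        obtain ⟨c, hcK, hcrep⟩ := hbspan z hz
        rw [hswap v z c hcK hcrep]
        have : ∀ l : Fin d, ∑ q, Ω (g q) (b l) * v q = 0 := fun l => congrFun hv0 l
        simp only [this, mul_zero, Finset.sum_const_zero]
      have hΘinj : Function.Injective Θ := by
        intro v w hvw
        have : Θ (v - w) = 0 := by rw [map_sub, hvw, sub_self]
        have := hker _ this
        rwa [sub_eq_zero] at this
      -- dimension count
      set eop : h ≃ₗ[hᵐᵒᵖ] hᵐᵒᵖ :=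
        { toFun := MulOpposite.op
          invFun := MulOpposite.unop
          left_inv := fun x => rfl
          right_inv := fun x => rfl
          map_add' := fun x y => rfl
          map_smul' := by
            intro c x
            simp only [RingHom.id_apply, MulOpposite.smul_eq_mul_unop, smul_eq_mul]
            rw [MulOpposite.op_mul, MulOpposite.op_unop] } with heop
      letI : Module.Finite hᵐᵒᵖ h := Module.Finite.equiv eop.symm
      haveI hfin1 : Module.Finite hᵐᵒᵖ ((G ⧸ U) → h) := Module.Finite.pi
      haveI hfin2 : Module.Finite hᵐᵒᵖ (Fin d → h) := Module.Finite.pi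
      have hrank1 : Module.finrank hᵐᵒᵖ ((G ⧸ U) → h) = n := by
        rw [LinearEquiv.finrank_eq (LinearEquiv.piCongrRight (fun _ : G ⧸ U => eop)),
          Module.finrank_pi]
      have hrank2 : Module.finrank hᵐᵒᵖ (Fin d → h) = d := by
        rw [LinearEquiv.finrank_eq (LinearEquiv.piCongrRight (fun _ : Fin d => eop)),
          Module.finrank_pi]
        simp
      have hnd : n = d := by
        have hle := LinearMap.finrank_le_finrank_of_injective hΘinj
        rw [hrank1, hrank2] at hle
        omega
      have hcard : Fintype.card (G ⧸ U) = d := by rw [← hn, hnd]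
      set eqv : (G ⧸ U) ≃ Fin d := Fintype.equivFinOfCardEq hcard with heqv
      set E : ((G ⧸ U) → h) ≃ₗ[hᵐᵒᵖ] (Fin d → h) :=
        LinearEquiv.funCongrLeft hᵐᵒᵖ h eqv.symm with hE
      set endo : ((G ⧸ U) → h) →ₗ[hᵐᵒᵖ] ((G ⧸ U) → h) := E.symm.toLinearMap ∘ₗ Θ with hendo
      have hendoinj : Function.Injective endo := by
        intro v w hvw
        apply hΘinj
        apply E.symm.injective
        exact hvw
      haveI : FiniteDimensional hᵐᵒᵖ ((G ⧸ U) → h) := hfin1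
      have hendosurj : Function.Surjective endo :=
        LinearMap.injective_iff_surjective.1 hendoinj
      obtain ⟨a, ha⟩ := hendosurj (E.symm (fun l => f (b l)))
      rw [hendo, LinearMap.comp_apply, LinearEquiv.coe_coe] at ha
      have hfb : ∀ l : Fin d, ∑ q, Ω (g q) (b l) * a q = f (b l) := by
        have h4 : Θ a = fun l => f (b l) := E.symm.injective ha
        exact fun l => congrFun h4 l
      -- f agrees with the combination on all of C
      have hfC : ∀ z ∈ C, f z = ∑ q, Ω (g q) z * a q := by
        intro z hz
        obtain ⟨c, hcK, hcrep⟩ := hbspan z hz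
        have hfz : f z = ∑ l, c l * f (b l) := by
          rw [hcrep, map_sum]
          refine Finset.sum_congr rfl fun l _ => ?_
          rw [map_mul, hf (c l) (hcK l)]
        rw [hfz, hswap a z c hcK hcrep]
        exact Finset.sum_congr rfl fun l _ => by rw [hfb l]
      -- multiplicativity forces a single term
      have hstar : ∀ y ∈ C, ∀ q : G ⧸ U, Ω (g q) y * a q = a q * f y := by
        intro y hyC
        set w : (G ⧸ U) → h := fun q => Ω (g q) y * a q - a q * f y with hw
        have hw0 : w = 0 := by
          apply myDedekind K C hKC (fun q => Ω (g q)) hgKfix hginj concl4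
          intro z hz
          have h1 : ∑ q, Ω (g q) z * (Ω (g q) y * a q) = f (z * y) := by
            have h5 : ∀ q : G ⧸ U, Ω (g q) z * (Ω (g q) y * a q) = Ω (g q) (z * y) * a q := by
              intro q
              rw [map_mul, mul_assoc]
            rw [Finset.sum_congr rfl fun q _ => h5 q]
            exact (hfC (z * y) (mul_mem hz hyC)).symm
          have h2 : ∑ q, Ω (g q) z * (a q * f y) = f z * f y := by
            calc ∑ q, Ω (g q) z * (a q * f y) = (∑ q, Ω (g q) z * a q) * f y := by
                  rw [Finset.sum_mul]
                  exact Finset.sum_congr rfl fun q _ => (mul_assoc _ _ _).symm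
              _ = f z * f y := by rw [← hfC z hz]
          calc ∑ q, Ω (g q) z * w q
              = ∑ q, Ω (g q) z * (Ω (g q) y * a q) - ∑ q, Ω (g q) z * (a q * f y) := by
                rw [← Finset.sum_sub_distrib]
                exact Finset.sum_congr rfl fun q _ => by rw [mul_sub]
            _ = f (z * y) - f z * f y := by rw [h1, h2]
            _ = 0 := by rw [map_mul, sub_self]
        intro q
        have h9 : Ω (g q) y * a q - a q * f y = 0 := congrFun hw0 q
        rwa [sub_eq_zero] at h9
      have hsum1 : ∑ q : G ⧸ U, a q = 1 := by
        have h6 := hfC 1 (one_mem C)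
        rw [map_one] at h6
        rw [Finset.sum_congr rfl (fun (q : G ⧸ U) _ => by rw [map_one, one_mul] :
          ∀ q ∈ Finset.univ, Ω (g q) 1 * a q = a q)] at h6
        exact h6.symm
      obtain ⟨qs, hqs⟩ : ∃ q : G ⧸ U, a q ≠ 0 := by
        by_contra hc
        push_neg at hc
        rw [Finset.sum_congr rfl fun q _ => hc q, Finset.sum_const_zero] at hsum1
        exact zero_ne_one hsum1
      have hcommK : ∀ c ∈ K, a qs * c = c * a qs := by
        intro c hc
        have h7 := hstar c (hKC hc) qs
        rw [hgKfix qs c hc, hf c hc] at h7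
        exact h7.symm
      have hcentral : ∀ x : h, a qs * x = x * a qs := concl4 (a qs) hqs hcommK
      refine ⟨g qs, fun z hz => ?_⟩
      have h8 := hstar z (hsC z hz) qs
      rw [hcentral (f z)] at h8
      exact (mul_right_cancel₀ hqs h8).symm
    -- Step B : compactness
    have hZclosed : ∀ x : h, IsClosed {σ : G | f x = Ω σ x} := by
      intro x
      by_cases hne : ∃ τ : G, f x = Ω τ x
      · obtain ⟨τ, hτ⟩ := hne
        have hSt : IsClosed {ρ : G | Ω ρ x = x} := by
          set St : Subgroup G :=
            { carrier := {σ : G | Ω σ x = x}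
              one_mem' := by show Ω 1 x = x; rw [map_one]; rfl
              mul_mem' := by
                intro σ τ' hσ hτ'
                show Ω (σ * τ') x = x
                rw [map_mul]
                show Ω σ (Ω τ' x) = x
                rw [hτ', hσ]
              inv_mem' := by
                intro σ hσ
                show Ω σ⁻¹ x = x
                conv_lhs => rw [← hσ]
                show (Ω σ⁻¹ * Ω σ) x = x
                rw [← map_mul, inv_mul_cancel, map_one]
                rfl } with hStdef
          exact Subgroup.isClosed_of_isOpen St (hstabopen x)
        have hpre : {σ : G | f x = Ω σ x} = (fun σ => τ⁻¹ * σ) ⁻¹' {ρ : G | Ω ρ x = x} := by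
          ext σ
          simp only [Set.mem_preimage, Set.mem_setOf_eq]
          constructor
          · intro hσ
            have h1 : Ω (τ⁻¹ * σ) x = Ω τ⁻¹ (Ω σ x) := by rw [map_mul]; rfl
            rw [h1, ← hσ, hτ]
            have h2 : Ω τ⁻¹ (Ω τ x) = Ω (τ⁻¹ * τ) x := by rw [map_mul]; rfl
            rw [h2, inv_mul_cancel, map_one]
            rfl
          · intro hσ
            have h1 : Ω σ x = Ω τ (Ω (τ⁻¹ * σ) x) := by
              have h2 : Ω (τ * (τ⁻¹ * σ)) x = Ω τ (Ω (τ⁻¹ * σ) x) := by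
                rw [map_mul Ω τ (τ⁻¹ * σ)]; rfl
              rw [← h2, mul_inv_cancel_left]
            rw [h1, hσ, hτ]
        rw [hpre]
        exact hSt.preimage (continuous_const.mul continuous_id)
      · have hempty : {σ : G | f x = Ω σ x} = ∅ := by
          ext σ
          simp only [Set.mem_setOf_eq, Set.mem_empty_iff_false, iff_false]
          intro hσ
          exact hne ⟨σ, hσ⟩
        rw [hempty]
        exact isClosed_empty
    have hnonempty : (⋂ x : h, {σ : G | f x = Ω σ x}).Nonempty := by
      by_contra hemp
      rw [Set.not_nonempty_iff_eq_empty] at hemp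
      obtain ⟨t, ht⟩ := isCompact_univ.elim_finite_subfamily_closed
        (fun x : h => {σ : G | f x = Ω σ x}) hZclosed (by rw [Set.univ_inter, hemp])
      obtain ⟨σ, hσ⟩ := hA t
      have : σ ∈ (Set.univ : Set G) ∩ ⋂ x ∈ t, {σ : G | f x = Ω σ x} := by
        refine ⟨Set.mem_univ σ, ?_⟩
        rw [Set.mem_iInter₂]
        intro x hx
        exact hσ x hx
      rw [ht] at this
      exact this
    obtain ⟨σ, hσ⟩ := hnonempty
    rw [Set.mem_iInter] at hσ
    exact ⟨σ, fun x => hσ x⟩
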